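/- Let β > 0, let U be Poisson distributed with parameter a > 0, and let R_1, R_2, ... be i.i.d. exponential random variables with parameter β, all independent. Then for λ > 0, the conditional distribution of U given R_1 + ... + R_U = λ (with the convention that an empty sum is 0, conditioning on the density at λ > 0) is the Bessel(-1, 2√(aβλ)) distribution supported on positive integers: P(U = n | sum = λ) ∝ (aβλ)^n / (n! (n-1)!) for n ≥ 1. -/
import Mathlib

open Real

/-- The modified Bessel function of the first kind, with the convention `1/Γ(0) = 0`. -/
noncomputable def besselI (ν z : ℝ) : ℝ :=
  (z / 2) ^ ν * ∑' n : ℕ, (z / 2) ^ (2 * n) / (n.factorial * Real.Gamma (n + ν + 1))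

/-- The Bessel(ν,z) probability mass function on ℕ (with `1/Γ(0) = 0`, so
`besselPMF (-1) z 0 = 0`). -/
noncomputable def besselPMF (ν z : ℝ) (n : ℕ) : ℝ :=
  (besselI ν z)⁻¹ * (z / 2) ^ ((2 * n : ℝ) + ν) / (n.factorial * Real.Gamma (n + ν + 1))

/-- Let β > 0, U Poisson(a), R_1, R_2, ... i.i.d. Exponential(β), all independent.
The joint density of (U, R_1 + ... + R_U) at (n, l) for l > 0 is
`e^{-a} a^n/n! · β^n/Γ(n) l^{n-1} e^{-βl}` (vanishing for n = 0 since `1/Γ(0) = 0`: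
the empty sum puts no mass on l > 0).  Conditioning on the sum being l > 0 yields
the Bessel(-1, 2√(aβl)) distribution, supported on positive integers. -/
theorem conditional_poisson_given_exponential_sum (β a l : ℝ)
    (hβ : 0 < β) (ha : 0 < a) (hl : 0 < l) :
    ∀ n : ℕ,
      (Real.exp (-a) * a ^ n / n.factorial * (β ^ n / Real.Gamma n) *
          l ^ ((n : ℝ) - 1) * Real.exp (-(β * l))) /
        (∑' m : ℕ, Real.exp (-a) * a ^ m / m.factorial * (β ^ m / Real.Gamma m) *
          l ^ ((m : ℝ) - 1) * Real.exp (-(β * l)))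
      = besselPMF (-1) (2 * Real.sqrt (a * β * l)) n := by
  intro n
  set x := Real.sqrt (a * β * l) with hxdef
  have habl : (0:ℝ) < a * β * l := by positivity
  have hx : 0 < x := Real.sqrt_pos.2 habl
  have hx2 : x ^ 2 = a * β * l := Real.sq_sqrt habl.le
  -- the core series
  set S : ℝ := ∑' m : ℕ, x ^ (2 * m) / (m.factorial * Real.Gamma m) with hS
  have hsum : Summable (fun m : ℕ => x ^ (2 * m) / (m.factorial * Real.Gamma m)) := by
    apply Summable.of_nonneg_of_le (fun m => by positivity) (fun m => ?_)
      (Real.summable_pow_div_factorial (x ^ 2))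
    rcases m with _ | k
    · simp [Real.Gamma_zero]
    · have hΓ : Real.Gamma (k + 1) = k.factorial := by
        exact_mod_cast Real.Gamma_nat_eq_factorial k
      rw [pow_mul, show ((k+1:ℕ):ℝ) = (k:ℝ)+1 by push_cast; ring, hΓ]
      apply div_le_div_of_nonneg_left (by positivity) (by positivity)
      have h1 : (1:ℝ) ≤ (k.factorial : ℝ) := by exact_mod_cast k.factorial_pos
      have h2 : (0:ℝ) < ((k+1).factorial : ℝ) := by exact_mod_cast (k+1).factorial_pos
      nlinarith
  have hSpos : 0 < S := by
    rw [hS]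
    apply Summable.tsum_pos hsum (fun m => by positivity) 1
    simp [Real.Gamma_one]
    positivity
  -- rewrite each term of the LHS
  set C : ℝ := Real.exp (-a) * Real.exp (-(β * l)) / l with hC
  have hCpos : 0 < C := by positivity
  have hterm : ∀ m : ℕ,
      Real.exp (-a) * a ^ m / m.factorial * (β ^ m / Real.Gamma m) *
        l ^ ((m : ℝ) - 1) * Real.exp (-(β * l))
      = C * (x ^ (2 * m) / (m.factorial * Real.Gamma m)) := by
    intro m
    have hlp : l ^ ((m : ℝ) - 1) = l ^ m / l := by
      rw [Real.rpow_sub hl, Real.rpow_one, Real.rpow_natCast]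
    rw [hlp, pow_mul, hx2, hC]
    field_simp
    ring
  have hLHSden : (∑' m : ℕ, Real.exp (-a) * a ^ m / m.factorial * (β ^ m / Real.Gamma m) *
      l ^ ((m : ℝ) - 1) * Real.exp (-(β * l))) = C * S := by
    rw [hS, ← tsum_mul_left]
    exact tsum_congr hterm
  rw [hterm n, hLHSden, mul_div_mul_left _ _ hCpos.ne']
  -- now the RHS
  have hz : 2 * x / 2 = x := by ring
  have hBI : besselI (-1) (2 * x) = x⁻¹ * S := by
    rw [besselI, hz, hS]
    congr 1
    · rw [Real.rpow_neg hx.le, Real.rpow_one]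
    · exact tsum_congr fun m => by rw [neg_add_cancel_right]
  rw [besselPMF, hBI, hz, neg_add_cancel_right]
  have hxp : x ^ ((2 * (n:ℝ)) + (-1)) = x ^ (2 * n) / x := by
    rw [Real.rpow_add hx, Real.rpow_neg hx.le, Real.rpow_one, ← Real.rpow_natCast x (2 * n)]
    push_cast
    ring_nf
  rw [hxp, mul_inv, inv_inv]
  rw [div_eq_inv_mul (x ^ (2*n)) x, mul_comm x S⁻¹, mul_assoc, mul_inv_cancel_left₀ hx.ne',
    div_div]
  ring
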